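/- Let ω > 0, t ∈ ℝ with sin(ωt) ≠ 0, and define u: ℝ³ → ℂ, u(x) = exp(i ω (|x−y|²/2 · cot(ωt) − x̃·y)) for a fixed y ∈ ℝ³, where x̃ = (−x₂, x₁, (csc(ωt) − cot(ωt)) x₃). Then (1/2)Δₓ u = [ (3/2) i ω cot(ωt) − ω² cot²(ωt) |x−y|²/2 − ω² |y|²/2 + ω² cot(ωt) x̃·y ] · u, where here the Laplacian acts on x and ỹ·x uses the fixed y. -/

import Mathlib

open Real Complex

/-- first spatial partial derivative of a function of three real variables -/
noncomputable def pd1 (u : ℝ → ℝ → ℝ → ℂ) : ℝ → ℝ → ℝ → ℂ :=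
  fun a b c => deriv (fun s => u s b c) a

noncomputable def pd2 (u : ℝ → ℝ → ℝ → ℂ) : ℝ → ℝ → ℝ → ℂ :=
  fun a b c => deriv (fun s => u a s c) b

noncomputable def pd3 (u : ℝ → ℝ → ℝ → ℂ) : ℝ → ℝ → ℝ → ℂ :=
  fun a b c => deriv (fun s => u a b s) c

lemma hasDerivAt_quad (k m n : ℂ) (a : ℝ) :
    HasDerivAt (fun s : ℝ => k * (s:ℂ)^2 + m * s + n) (2*k*a + m) a := by
  have h : HasDerivAt (fun z : ℂ => k * z^2 + m * z + n) (2*k*a + m) (a:ℂ) := by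
    have hid := hasDerivAt_id (a:ℂ)
    have h1 : HasDerivAt (fun z : ℂ => k * z^2) (k * (2 * (a:ℂ)^1 * 1)) _ := (hid.pow 2).const_mul k
    have h2 : HasDerivAt (fun z : ℂ => m * z) (m * 1) _ := hid.const_mul m
    have h3 := (h1.add h2).add_const n
    exact h3.congr_deriv (by ring)
  exact h.comp_ofReal

lemma deriv_exp_quad (k m n : ℂ) (a : ℝ) :
    deriv (fun s : ℝ => Complex.exp (k * (s:ℂ)^2 + m * s + n)) a
      = (2*k*a + m) * Complex.exp (k * (a:ℂ)^2 + m * a + n) := by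
  have := (hasDerivAt_quad k m n a).cexp
  rw [this.deriv]; ring

lemma deriv_exp_quad' (k m n : ℂ) (a : ℝ) :
    deriv (fun s : ℝ => (2*k*s + m) * Complex.exp (k * (s:ℂ)^2 + m * s + n)) a
      = (2*k + (2*k*a + m)^2) * Complex.exp (k * (a:ℂ)^2 + m * a + n) := by
  have hlin : HasDerivAt (fun s : ℝ => 2*k*(s:ℂ) + m) (2*k) a := by
    have h : HasDerivAt (fun z : ℂ => 2*k*z + m) (2*k) (a:ℂ) := by
      have := ((hasDerivAt_id (a:ℂ)).const_mul (2*k)).add_const m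
      exact this.congr_deriv (by simp)
    exact h.comp_ofReal
  have := hlin.mul (hasDerivAt_quad k m n a).cexp
  rw [show (fun s : ℝ => (2*k*s + m) * Complex.exp (k * (s:ℂ)^2 + m * s + n)) = ((fun s : ℝ => 2*k*(s:ℂ) + m) * fun x : ℝ => Complex.exp (k * (x:ℂ)^2 + m * x + n)) from rfl, this.deriv]; ring

set_option maxHeartbeats 2000000 in
theorem laplacian_of_kernel (ω t : ℝ) (hω : 0 < ω) (hsin : Real.sin (ω * t) ≠ 0)
    (y₁ y₂ y₃ : ℝ) :
    let cot : ℝ := Real.cos (ω * t) / Real.sin (ω * t)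
    let csc : ℝ := 1 / Real.sin (ω * t)
    -- x̃·y with x̃ = (−x₂, x₁, (csc−cot)x₃)
    let xty : ℝ → ℝ → ℝ → ℝ := fun a b c => -b * y₁ + a * y₂ + (csc - cot) * c * y₃
    let u : ℝ → ℝ → ℝ → ℂ := fun a b c =>
      Complex.exp (Complex.I * (ω : ℂ) *
        (((a - y₁) ^ 2 + (b - y₂) ^ 2 + (c - y₃) ^ 2) / 2 * (cot : ℂ) - (xty a b c : ℂ)))
    ∀ a b c : ℝ,
      (1 / 2 : ℂ) * (pd1 (pd1 u) a b c + pd2 (pd2 u) a b c + pd3 (pd3 u) a b c) =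
        ((3 / 2 : ℂ) * Complex.I * ω * cot
          - (ω : ℂ) ^ 2 * (cot : ℂ) ^ 2 * (((a - y₁) ^ 2 + (b - y₂) ^ 2 + (c - y₃) ^ 2) / 2)
          - (ω : ℂ) ^ 2 * ((y₁ ^ 2 + y₂ ^ 2 + y₃ ^ 2 : ℝ) : ℂ) / 2
          + (ω : ℂ) ^ 2 * (cot : ℂ) * (xty a b c : ℂ)) * u a b c := by
  intro cot csc xty u a b c
  have hkeyR : (csc - cot)^2 + 2*cot*(csc - cot) = 1 := by
    unfold csc cot
    field_simp
    linear_combination (-1 : ℝ) * Real.sin_sq_add_cos_sq (ω*t)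
  have hkey : ((csc:ℂ) - (cot:ℂ))^2 + 2*(cot:ℂ)*((csc:ℂ) - (cot:ℂ)) = 1 := by
    exact_mod_cast congrArg (Complex.ofReal ·) hkeyR
  have hI : Complex.I^2 = -1 := Complex.I_sq
  obtain ⟨K, hK⟩ : ∃ x : ℂ, x = Complex.I * ω * (cot:ℂ) / 2 := ⟨_, rfl⟩
  obtain ⟨M₁, hM₁⟩ : ∃ x : ℂ, x = Complex.I * ω * (-(y₁:ℂ) * cot - y₂) := ⟨_, rfl⟩
  obtain ⟨M₂, hM₂⟩ : ∃ x : ℂ, x = Complex.I * ω * (-(y₂:ℂ) * cot + y₁) := ⟨_, rfl⟩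
  obtain ⟨M₃, hM₃⟩ : ∃ x : ℂ, x = Complex.I * ω * (-(y₃:ℂ) * cot - ((csc:ℂ) - cot) * y₃) := ⟨_, rfl⟩
  obtain ⟨N₁, hN₁⟩ : ∃ x : ℂ, x = Complex.I * ω * (((y₁:ℂ)^2 + ((b:ℂ) - y₂)^2 + ((c:ℂ) - y₃)^2)/2 * cot
      - (-(b:ℂ) * y₁ + ((csc:ℂ) - cot) * c * y₃)) := ⟨_, rfl⟩
  obtain ⟨N₂, hN₂⟩ : ∃ x : ℂ, x = Complex.I * ω * ((((a:ℂ) - y₁)^2 + (y₂:ℂ)^2 + ((c:ℂ) - y₃)^2)/2 * cot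
      - ((a:ℂ) * y₂ + ((csc:ℂ) - cot) * c * y₃)) := ⟨_, rfl⟩
  obtain ⟨N₃, hN₃⟩ : ∃ x : ℂ, x = Complex.I * ω * ((((a:ℂ) - y₁)^2 + ((b:ℂ) - y₂)^2 + (y₃:ℂ)^2)/2 * cot
      - (-(b:ℂ) * y₁ + (a:ℂ) * y₂)) := ⟨_, rfl⟩
  have hu1 : (fun s : ℝ => u s b c) = fun s : ℝ => Complex.exp (K * (s:ℂ)^2 + M₁ * s + N₁) := by
    funext s
    rw [hK, hM₁, hN₁]
    show Complex.exp _ = _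
    congr 1
    unfold xty
    push_cast
    ring
  have hu2 : (fun s : ℝ => u a s c) = fun s : ℝ => Complex.exp (K * (s:ℂ)^2 + M₂ * s + N₂) := by
    funext s
    rw [hK, hM₂, hN₂]
    show Complex.exp _ = _
    congr 1
    unfold xty
    push_cast
    ring
  have hu3 : (fun s : ℝ => u a b s) = fun s : ℝ => Complex.exp (K * (s:ℂ)^2 + M₃ * s + N₃) := by
    funext s
    rw [hK, hM₃, hN₃]
    show Complex.exp _ = _
    congr 1
    unfold xty
    push_cast
    ring
  have hd1 : (fun s : ℝ => pd1 u s b c)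
      = fun s : ℝ => (2*K*s + M₁) * Complex.exp (K * (s:ℂ)^2 + M₁ * s + N₁) := by
    funext s
    show deriv (fun s' => u s' b c) s = _
    rw [hu1, deriv_exp_quad]
  have hd2 : (fun s : ℝ => pd2 u a s c)
      = fun s : ℝ => (2*K*s + M₂) * Complex.exp (K * (s:ℂ)^2 + M₂ * s + N₂) := by
    funext s
    show deriv (fun s' => u a s' c) s = _
    rw [hu2, deriv_exp_quad]
  have hd3 : (fun s : ℝ => pd3 u a b s)
      = fun s : ℝ => (2*K*s + M₃) * Complex.exp (K * (s:ℂ)^2 + M₃ * s + N₃) := by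
    funext s
    show deriv (fun s' => u a b s') s = _
    rw [hu3, deriv_exp_quad]
  have H1 : pd1 (pd1 u) a b c
      = (2*K + (2*K*a + M₁)^2) * Complex.exp (K * (a:ℂ)^2 + M₁ * a + N₁) := by
    show deriv (fun s => pd1 u s b c) a = _
    rw [hd1, deriv_exp_quad']
  have H2 : pd2 (pd2 u) a b c
      = (2*K + (2*K*b + M₂)^2) * Complex.exp (K * (b:ℂ)^2 + M₂ * b + N₂) := by
    show deriv (fun s => pd2 u a s c) b = _
    rw [hd2, deriv_exp_quad']
  have H3 : pd3 (pd3 u) a b c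
      = (2*K + (2*K*c + M₃)^2) * Complex.exp (K * (c:ℂ)^2 + M₃ * c + N₃) := by
    show deriv (fun s => pd3 u a b s) c = _
    rw [hd3, deriv_exp_quad']
  have hu1a : u a b c = Complex.exp (K * (a:ℂ)^2 + M₁ * a + N₁) := congrFun hu1 a
  have hu2a : u a b c = Complex.exp (K * (b:ℂ)^2 + M₂ * b + N₂) := congrFun hu2 b
  have hu3a : u a b c = Complex.exp (K * (c:ℂ)^2 + M₃ * c + N₃) := congrFun hu3 c
  rw [H1, H2, H3, ← hu1a, ← hu2a, ← hu3a]
  have hcoef : (1/2 : ℂ) * ((2*K + (2*K*a + M₁)^2) + (2*K + (2*K*b + M₂)^2)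
        + (2*K + (2*K*c + M₃)^2))
      = ((3 / 2 : ℂ) * Complex.I * ω * cot
          - (ω : ℂ) ^ 2 * (cot : ℂ) ^ 2 * (((a - y₁) ^ 2 + (b - y₂) ^ 2 + (c - y₃) ^ 2) / 2)
          - (ω : ℂ) ^ 2 * ((y₁ ^ 2 + y₂ ^ 2 + y₃ ^ 2 : ℝ) : ℂ) / 2
          + (ω : ℂ) ^ 2 * (cot : ℂ) * (xty a b c : ℂ)) := by
    unfold xty
    rw [hK, hM₁, hM₂, hM₃]
    push_cast
    linear_combination ((ω:ℂ)^2/2 * ((((a:ℂ)-y₁)*cot - y₂)^2 + (((b:ℂ)-y₂)*cot + y₁)^2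
        + (((c:ℂ)-y₃)*cot - ((csc:ℂ)-cot)*y₃)^2)) * hI - ((ω:ℂ)^2 * (y₃:ℂ)^2 / 2) * hkey
  linear_combination (u a b c) * hcoef
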